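/- Let X ⊆ ℝⁿ be nonempty, compact and convex, and let f, g : X → ℝ be continuous and concave, with g strictly concave. Let M = {x ∈ X : f(x) = max_{y∈X} f(y)}; M is nonempty, compact and convex, so g has a unique maximizer x̄ on M. For each t > 0 let x*(t) ∈ X be the unique maximizer of f + t·g over X, and let v(t) =ف(x*(t)) + t·g(x*(t)) be the maximum value, i.e. v(t) = max_{x∈X}(f(x)+t·g(x)). Then: (i) x*(t) → x̄ as t → 0⁺; (ii) v extends continuously to [0,∞) by setting v(0) = f(x̄); (iii) the right derivative of v at 0 exists and equals g(x̄). -/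
import Mathlib

noncomputable section

open Filter Topology Set

/-- let `X ⊆ ℝⁿ` be nonempty, compact and convex, `f, g` continuous and
concave on `X` with `g` strictly concave, `M` the set of maximizers of `f`, `x̄` a
maximizer of `g` on `M`, for each `t > 0` let `x*(t)` be a maximizer of `f + t·g` on
`X`, and let `v(t) = max_{x∈X}(f(x)+t·g(x))`.  Then `x*(t) → x̄` as `t → 0⁺`, `v`
extends continuously to `0` with value `f(x̄)`, and the right derivative of `v` at `0`
is `g(x̄)`. -/
theorem stmt8 {n : ℕ} (X : Set (Fin n → ℝ))
    (hXne : X.Nonempty) (hXcomp : IsCompact X) (hXconv : Convex ℝ X)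
    (f g : (Fin n → ℝ) → ℝ)
    (hf : ContinuousOn f X) (hg : ContinuousOn g X)
    (hfc : ConcaveOn ℝ X f) (hgc : StrictConcaveOn ℝ X g)
    (M : Set (Fin n → ℝ)) (hM : M = {x ∈ X | ∀ y ∈ X, f y ≤ f x})
    (xbar : Fin n → ℝ) (hxbarM : xbar ∈ M) (hxbarmax : ∀ y ∈ M, g y ≤ g xbar)
    (xstar : ℝ → Fin n → ℝ)
    (hxstar : ∀ t : ℝ, 0 < t → xstar t ∈ X ∧
      ∀ y ∈ X, f y + t * g y ≤ f (xstar t) + t * g (xstar t))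
    (v : ℝ → ℝ) (hv : ∀ t : ℝ, v t = sSup ((fun x => f x + t * g x) '' X)) :
    Filter.Tendsto xstar (nhdsWithin 0 (Set.Ioi 0)) (nhds xbar) ∧
    Filter.Tendsto v (nhdsWithin 0 (Set.Ioi 0)) (nhds (f xbar)) ∧
    HasDerivWithinAt v (g xbar) (Set.Ioi 0) 0 := by
  obtain ⟨xg, hxgX, hxgmax⟩ := hXcomp.exists_isMaxOn hXne hg
  rw [hM] at hxbarM
  obtain ⟨hxbarX, hfmax⟩ := hxbarM
  set C : ℝ := g xg - g xbar with hCdef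
  have hC0 : 0 ≤ C := sub_nonneg.2 (hxgmax hxbarX)
  -- uniqueness of the maximizer of g on M
  have huniq : ∀ z ∈ X, f xbar ≤ f z → g xbar ≤ g z → z = xbar := by
    intro z hzX hfz hgz
    by_contra hne
    have hzM : z ∈ M := by
      rw [hM]; exact ⟨hzX, fun y hy => (hfmax y hy).trans hfz⟩
    have hmid : (1/2 : ℝ) • z + (1/2 : ℝ) • xbar ∈ X :=
      hXconv hzX hxbarX (by norm_num) (by norm_num) (by norm_num)
    have hfm : f xbar ≤ f ((1/2 : ℝ) • z + (1/2 : ℝ) • xbar) := by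
      have h := hfc.2 hzX hxbarX (by norm_num : (0:ℝ) ≤ 1/2) (by norm_num : (0:ℝ) ≤ 1/2)
        (by norm_num)
      simp only [smul_eq_mul] at h
      nlinarith
    have hmidM : (1/2 : ℝ) • z + (1/2 : ℝ) • xbar ∈ M := by
      rw [hM]; exact ⟨hmid, fun y hy => (hfmax y hy).trans hfm⟩
    have hgm := hgc.2 hzX hxbarX hne (by norm_num : (0:ℝ) < 1/2)
      (by norm_num : (0:ℝ) < 1/2) (by norm_num)
    simp only [smul_eq_mul] at hgm
    have := hxbarmax _ hmidM
    nlinarith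
  -- basic inequalities
  have hxX : ∀ t : ℝ, 0 < t → xstar t ∈ X := fun t ht => (hxstar t ht).1
  have hA : ∀ t : ℝ, 0 < t → f xbar + t * g xbar ≤ f (xstar t) + t * g (xstar t) :=
    fun t ht => (hxstar t ht).2 xbar hxbarX
  have hB : ∀ t : ℝ, 0 < t → f (xstar t) ≤ f xbar := fun t ht => hfmax _ (hxX t ht)
  have hCineq : ∀ t : ℝ, 0 < t → g xbar ≤ g (xstar t) := by
    intro t ht
    have h1 := hA t ht; have h2 := hB t ht
    nlinarith
  have hD : ∀ t : ℝ, 0 < t → f xbar - t * C ≤ f (xstar t) := by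
    intro t ht
    have h1 := hA t ht
    have h2 : g (xstar t) ≤ g xg := hxgmax (hxX t ht)
    nlinarith
  -- Part (i)
  have part1 : Tendsto xstar (𝓝[>] (0:ℝ)) (𝓝 xbar) := by
    rw [Metric.tendsto_nhds]
    intro ε hε
    -- key claim: a threshold δ
    have key : ∃ δ : ℝ, 0 < δ ∧
        ∀ x ∈ X, f xbar - δ * C ≤ f x → g xbar ≤ g x → dist x xbar < ε := by
      by_contra hcon
      push_neg at hcon
      have hex : ∀ k : ℕ, ∃ x, x ∈ X ∧ f xbar - (1/(k+1)) * C ≤ f x ∧ g xbar ≤ g x ∧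
          ε ≤ dist x xbar := by
        intro k
        obtain ⟨x, hx1, hx2, hx3, hx4⟩ := hcon (1/(k+1)) (by positivity)
        exact ⟨x, hx1, hx2, hx3, hx4⟩
      choose x hx1 hx2 hx3 hx4 using hex
      obtain ⟨xh, hxhX, φ, hφ, hconv⟩ := hXcomp.tendsto_subseq hx1
      have hconvX : Tendsto (x ∘ φ) atTop (𝓝[X] xh) :=
        tendsto_nhdsWithin_iff.2 ⟨hconv, Eventually.of_forall fun k => hx1 (φ k)⟩
      have hft : Tendsto (fun k => f (x (φ k))) atTop (𝓝 (f xh)) :=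
        (hf xh hxhX).tendsto.comp hconvX
      have hgt : Tendsto (fun k => g (x (φ k))) atTop (𝓝 (g xh)) :=
        (hg xh hxhX).tendsto.comp hconvX
      have hfxh : f xbar ≤ f xh := by
        have hlow : Tendsto (fun k : ℕ => f xbar - (1/(k+1 : ℝ)) * C) atTop
            (𝓝 (f xbar)) := by
          have := tendsto_one_div_add_atTop_nhds_zero_nat.mul_const C
          have h2 := tendsto_const_nhds.sub (f := fun k : ℕ => f xbar) this
          simpa using h2
        refine le_of_tendsto_of_tendsto' hlow hft fun k => ?_
        calc f xbar - (1/(k+1 : ℝ)) * C ≤ f xbar - (1/(φ k+1 : ℝ)) * C := by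
              have h1 : (k : ℝ) + 1 ≤ (φ k : ℝ) + 1 := by
                have h0 : k ≤ φ k := hφ.le_apply
                exact_mod_cast Nat.succ_le_succ h0
              have : (1/(φ k+1 : ℝ)) ≤ 1/(k+1 : ℝ) := by
                apply one_div_le_one_div_of_le (by positivity) h1
              nlinarith
          _ ≤ f (x (φ k)) := hx2 (φ k)
      have hgxh : g xbar ≤ g xh :=
        le_of_tendsto_of_tendsto' tendsto_const_nhds hgt fun k => hx3 (φ k)
      have hdist : ε ≤ dist xh xbar := by
        have hdt : Tendsto (fun k => dist (x (φ k)) xbar) atTop (𝓝 (dist xh xbar)) :=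
          (Continuous.dist continuous_id continuous_const).continuousAt.tendsto.comp hconv
        exact le_of_tendsto_of_tendsto' tendsto_const_nhds hdt fun k => hx4 (φ k)
      have : xh = xbar := huniq xh hxhX hfxh hgxh
      rw [this] at hdist; simp at hdist; linarith
    obtain ⟨δ, hδ0, hδ⟩ := key
    filter_upwards [Ioo_mem_nhdsGT_of_mem (show (0:ℝ) ∈ Ico 0 δ from ⟨le_refl _, hδ0⟩)]
      with t ht
    obtain ⟨ht0, htδ⟩ := ht
    refine hδ _ (hxX t ht0) ?_ (hCineq t ht0)
    have := hD t ht0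
    nlinarith
  -- value formula
  have hvt : ∀ t : ℝ, 0 < t → v t = f (xstar t) + t * g (xstar t) := by
    intro t ht
    rw [hv t]
    exact IsGreatest.csSup_eq ⟨⟨xstar t, hxX t ht, rfl⟩, by
      rintro _ ⟨y, hy, rfl⟩; exact (hxstar t ht).2 y hy⟩
  have hv0 : v 0 = f xbar := by
    rw [hv 0]
    have : (fun x => f x + (0:ℝ) * g x) '' X = f '' X := by
      apply image_congr; intro x _; ring
    rw [this]
    exact IsGreatest.csSup_eq ⟨⟨xbar, hxbarX, rfl⟩, by
      rintro _ ⟨y, hy, rfl⟩; exact hfmax y hy⟩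
  -- g (xstar t) → g xbar
  have hgx : Tendsto (fun t => g (xstar t)) (𝓝[>] (0:ℝ)) (𝓝 (g xbar)) := by
    refine (hg xbar hxbarX).tendsto.comp (tendsto_nhdsWithin_iff.2 ⟨part1, ?_⟩)
    filter_upwards [self_mem_nhdsWithin] with t ht
    exact hxX t ht
  -- Part (ii)
  have part2 : Tendsto v (𝓝[>] (0:ℝ)) (𝓝 (f xbar)) := by
    have hup : Tendsto (fun t : ℝ => f xbar + t * g (xstar t)) (𝓝[>] (0:ℝ))
        (𝓝 (f xbar)) := by
      have h1 : Tendsto (fun t : ℝ => t) (𝓝[>] (0:ℝ)) (𝓝 0) :=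
        tendsto_id.mono_left nhdsWithin_le_nhds
      have h2 := (tendsto_const_nhds : Tendsto (fun _ : ℝ => f xbar) (𝓝[>] (0:ℝ)) _).add (h1.mul hgx)
      simpa using h2
    have hlo : Tendsto (fun t : ℝ => f xbar + t * g xbar) (𝓝[>] (0:ℝ))
        (𝓝 (f xbar)) := by
      have h1 : Tendsto (fun t : ℝ => t) (𝓝[>] (0:ℝ)) (𝓝 0) :=
        tendsto_id.mono_left nhdsWithin_le_nhds
      have h2 := (tendsto_const_nhds : Tendsto (fun _ : ℝ => f xbar) (𝓝[>] (0:ℝ)) _).add (h1.mul_const (g xbar))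
      simpa using h2
    refine tendsto_of_tendsto_of_tendsto_of_le_of_le' hlo hup ?_ ?_
    · filter_upwards [self_mem_nhdsWithin] with t ht
      rw [hvt t ht]; exact hA t ht
    · filter_upwards [self_mem_nhdsWithin] with t ht
      rw [hvt t ht]
      have := hB t ht; linarith
  -- Part (iii)
  refine ⟨part1, part2, ?_⟩
  rw [hasDerivWithinAt_iff_tendsto_slope]
  have hset : (Ioi (0:ℝ)) \ {0} = Ioi 0 :=
    diff_singleton_eq_self (by simp)
  rw [hset]
  have hsl : ∀ t : ℝ, 0 < t → slope v 0 t = (v t - f xbar) / t := by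
    intro t ht
    rw [slope_def_field, hv0]
    rw [sub_zero]
  refine tendsto_of_tendsto_of_tendsto_of_le_of_le'
    (tendsto_const_nhds : Tendsto (fun _ : ℝ => g xbar) _ _) hgx ?_ ?_
  · filter_upwards [self_mem_nhdsWithin] with t ht
    have ht : (0:ℝ) < t := ht
    rw [hsl t ht, le_div_iff₀ ht]
    have h1 := hA t ht
    have h2 := hvt t ht
    nlinarith
  · filter_upwards [self_mem_nhdsWithin] with t ht
    have ht : (0:ℝ) < t := ht
    rw [hsl t ht, div_le_iff₀ ht]
    have h1 := hB t ht
    have h2 := hvt t ht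
    nlinarith
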